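/- Reduction to squashed non-Markovianity for product spectators: Let ρ_ABCD = ω_ABC ⊗ τ_D, where ω_ABC is a state on H_A ⊗ H_B ⊗ H_C and τ_D is a state on H_D. Then T_sq(A;C|B)_ρ = N_sq(A;C|B)_ω. -/

import Mathlib

open scoped ComplexOrder

/-- A density operator (quantum state): positive semidefinite with unit trace. -/
def IsDensity {d : Type*} [Fintype d] (ρ : Matrix d d ℂ) : Prop :=
  ρ.PosSemidef ∧ ρ.trace = 1

/-- Von Neumann entropy `S(ρ) = −tr(ρ log₂ ρ)`, computed via eigenvalues
(with the convention `0 · log₂ 0 = 0`); junk value `0` on non-Hermitian input. -/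
noncomputable def vnEntropy {d : Type*} [Fintype d] [DecidableEq d]
    (ρ : Matrix d d ℂ) : ℝ := by
  classical exact
    if h : ρ.IsHermitian then -∑ i, (h.eigenvalues i) * Real.logb 2 (h.eigenvalues i) else 0

/-- Quantum conditional mutual information `I(x;z|y)_ρ = S(xy) + S(yz) − S(y) − S(xyz)`
for a state on `x ⊗ y ⊗ z` (conditioning on the middle system `y`). -/
noncomputable def qcmi {x y z : Type*} [Fintype x] [Fintype y] [Fintype z]
    [DecidableEq x] [DecidableEq y] [DecidableEq z]
    (ρ : Matrix (x × y × z) (x × y × z) ℂ) : ℝ :=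
  vnEntropy (Matrix.of fun (p q : x × y) => ∑ c, ρ (p.1, p.2, c) (q.1, q.2, c))
  + vnEntropy (Matrix.of fun (p q : y × z) => ∑ a, ρ (a, p.1, p.2) (a, q.1, q.2))
  - vnEntropy (Matrix.of fun (b b' : y) => ∑ a, ∑ c, ρ (a, b, c) (a, b', c))
  - vnEntropy ρ

/-- For a state `σ` on `A ⊗ B ⊗ C ⊗ D ⊗ E`, the conditional mutual information
`I(A;C|BE)_σ`: the spectator `D` is traced out and `BE` is the conditioning system. -/
noncomputable def qcmiACgivenBE {dA dB dC dD dE : Type*}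
    [Fintype dA] [Fintype dB] [Fintype dC] [Fintype dD] [Fintype dE]
    [DecidableEq dA] [DecidableEq dB] [DecidableEq dC] [DecidableEq dE]
    (σ : Matrix ((dA × dB × dC × dD) × dE) ((dA × dB × dC × dD) × dE) ℂ) : ℝ :=
  qcmi (Matrix.of fun (p q : dA × (dB × dE) × dC) =>
    ∑ d : dD, σ ((p.1, p.2.1.1, p.2.2, d), p.2.1.2) ((q.1, q.2.1.1, q.2.2, d), q.2.1.2))

/-- Hysteretic squashed entanglement `T_sq(A;C|B)_ρ` of a state on `A ⊗ B ⊗ C ⊗ D`: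
half the infimum of `I(A;C|BE)_σ` over all state extensions `σ_ABCDE` of `ρ_ABCD`,
over all finite-dimensional extension systems `E`. -/
noncomputable def Tsq {dA dB dC dD : Type*}
    [Fintype dA] [Fintype dB] [Fintype dC] [Fintype dD]
    [DecidableEq dA] [DecidableEq dB] [DecidableEq dC] [DecidableEq dD]
    (ρ : Matrix (dA × dB × dC × dD) (dA × dB × dC × dD) ℂ) : ℝ :=
  sInf { t : ℝ | ∃ (nE : ℕ)
    (σ : Matrix ((dA × dB × dC × dD) × Fin nE) ((dA × dB × dC × dD) × Fin nE) ℂ),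
    IsDensity σ ∧ (Matrix.of fun p q => ∑ e, σ (p, e) (q, e)) = ρ ∧
    t = (1/2) * qcmiACgivenBE σ }

/-- For a state `σ` on `A ⊗ B ⊗ C ⊗ E`, the conditional mutual information
`I(A;C|BE)_σ` with conditioning system `BE`. -/
noncomputable def qcmi3 {dA dB dC dE : Type*}
    [Fintype dA] [Fintype dB] [Fintype dC] [Fintype dE]
    [DecidableEq dA] [DecidableEq dB] [DecidableEq dC] [DecidableEq dE]
    (σ : Matrix ((dA × dB × dC) × dE) ((dA × dB × dC) × dE) ℂ) : ℝ :=
  qcmi (Matrix.of fun (p q : dA × (dB × dE) × dC) =>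
    σ ((p.1, p.2.1.1, p.2.2), p.2.1.2) ((q.1, q.2.1.1, q.2.2), q.2.1.2))

/-- Squashed quantum non-Markovianity `N_sq(A;C|B)_ρ` of a state on `A ⊗ B ⊗ C`:
half the infimum of `I(A;C|BE)_σ` over all state extensions `σ_ABCE` of `ρ_ABC`. -/
noncomputable def Nsq {dA dB dC : Type*}
    [Fintype dA] [Fintype dB] [Fintype dC]
    [DecidableEq dA] [DecidableEq dB] [DecidableEq dC]
    (ρ : Matrix (dA × dB × dC) (dA × dB × dC) ℂ) : ℝ :=
  sInf { t : ℝ | ∃ (nE : ℕ)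
    (σ : Matrix ((dA × dB × dC) × Fin nE) ((dA × dB × dC) × Fin nE) ℂ),
    IsDensity σ ∧ (Matrix.of fun p q => ∑ e, σ (p, e) (q, e)) = ρ ∧
    t = (1/2) * qcmi3 σ }

/-- Choi matrix of a linear map on matrices. -/
noncomputable def choiMatrix {dX dY : Type*} [Fintype dX] [DecidableEq dX] [Fintype dY]
    (Φ : Matrix dX dX ℂ →ₗ[ℂ] Matrix dY dY ℂ) : Matrix (dX × dY) (dX × dY) ℂ :=
  Matrix.of fun p q => Φ (Matrix.single p.1 q.1 1) p.2 q.2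

/-- A quantum channel: completely positive (equivalently, PSD Choi matrix, by Choi's
theorem) and trace-preserving linear map. -/
def IsQuantumChannel {dX dY : Type*} [Fintype dX] [DecidableEq dX] [Fintype dY]
    (Φ : Matrix dX dX ℂ →ₗ[ℂ] Matrix dY dY ℂ) : Prop :=
  (choiMatrix Φ).PosSemidef ∧ ∀ ρ : Matrix dX dX ℂ, (Φ ρ).trace = ρ.trace

/-- `(Φ ⊗ id)` applied to an operator on `X ⊗ R`. -/
noncomputable def applyLeft {dX dY dR : Type*} [Fintype dX] [DecidableEq dX]
    (Φ : Matrix dX dX ℂ →ₗ[ℂ] Matrix dY dY ℂ)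
    (ρ : Matrix (dX × dR) (dX × dR) ℂ) : Matrix (dY × dR) (dY × dR) ℂ :=
  Matrix.of fun p q => ∑ a, ∑ a',
    Φ (Matrix.single a a' 1) p.1 q.1 * ρ (a, p.2) (a', q.2)

/-- `(id ⊗ Φ)` applied to an operator on `R ⊗ X`. -/
noncomputable def applyRight {dX dY dR : Type*} [Fintype dX] [DecidableEq dX]
    (Φ : Matrix dX dX ℂ →ₗ[ℂ] Matrix dY dY ℂ)
    (ρ : Matrix (dR × dX) (dR × dX) ℂ) : Matrix (dR × dY) (dR × dY) ℂ :=
  Matrix.of fun p q => ∑ x, ∑ x',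
    Φ (Matrix.single x x' 1) p.2 q.2 * ρ (p.1, x) (q.1, x')

/-- Positive semidefinite square root (the former `Matrix.PosSemidef.sqrt`). -/
noncomputable def psdSqrt {d : Type*} [Fintype d] [DecidableEq d] {A : Matrix d d ℂ}
    (hA : A.PosSemidef) : Matrix d d ℂ :=
  (hA.1.eigenvectorUnitary : Matrix d d ℂ) *
    Matrix.diagonal ((↑) ∘ (fun x : ℝ => Real.sqrt x) ∘ hA.1.eigenvalues) *
    (star hA.1.eigenvectorUnitary : Matrix d d ℂ)

/-- Trace norm `‖X‖₁ = tr √(XᴴX)`. -/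
noncomputable def traceNorm {d : Type*} [Fintype d] [DecidableEq d]
    (X : Matrix d d ℂ) : ℝ :=
  ((psdSqrt (Matrix.posSemidef_conjTranspose_mul_self X)).trace).re

/-- Fidelity `F(ρ,σ) = (tr|√ρ √σ|)²` (junk value `0` off the PSD cone). -/
noncomputable def fidelity {d : Type*} [Fintype d] [DecidableEq d]
    (ρ σ : Matrix d d ℂ) : ℝ := by
  classical exact
    if h : ρ.PosSemidef ∧ σ.PosSemidef then (traceNorm (psdSqrt h.1 * psdSqrt h.2)) ^ 2 else 0

/-- Binary entropy (base 2), with `h₂(0) = h₂(1) = 0`. -/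
noncomputable def binEnt (p : ℝ) : ℝ :=
  -(p * Real.logb 2 p) - (1 - p) * Real.logb 2 (1 - p)

/-- ABC-marginal of the pure state `|v⟩⟨v|` on `A ⊗ B ⊗ C ⊗ D`. -/
noncomputable def pureMargABC {dA dB dC dD : Type*}
    [Fintype dA] [Fintype dB] [Fintype dC] [Fintype dD]
    (v : (dA × dB × dC × dD) → ℂ) : Matrix (dA × dB × dC) (dA × dB × dC) ℂ :=
  Matrix.of fun p q =>
    ∑ d, v (p.1, p.2.1, p.2.2, d) * (starRingEnd ℂ) (v (q.1, q.2.1, q.2.2, d))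

/-- Convex-roof extension of QCMI: `co(QCMI)[ρ_ABCD]` is half the infimum of
`Σ_i p_i I(A;C|B)_{ψ^i}` over finite pure-state ensembles `{p_i, ψ^i}` for `ρ`. -/
noncomputable def coQCMI {dA dB dC dD : Type*}
    [Fintype dA] [Fintype dB] [Fintype dC] [Fintype dD]
    [DecidableEq dA] [DecidableEq dB] [DecidableEq dC] [DecidableEq dD]
    (ρ : Matrix (dA × dB × dC × dD) (dA × dB × dC × dD) ℂ) : ℝ :=
  sInf { t : ℝ | ∃ (k : ℕ) (p : Fin k → ℝ) (v : Fin k → (dA × dB × dC × dD) → ℂ),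
    (∀ i, 0 ≤ p i) ∧ (∑ i, p i) = 1 ∧
    (∀ i, ∑ a, v i a * (starRingEnd ℂ) (v i a) = 1) ∧
    ρ = ∑ i, (p i : ℂ) • Matrix.of (fun a b => v i a * (starRingEnd ℂ) (v i b)) ∧
    t = (1/2) * ∑ i, p i * qcmi (pureMargABC (v i)) }


open scoped Kronecker

private lemma posSemidef_finsum' {i m : Type*} [Fintype m] (s : Finset i) (f : i → Matrix m m ℂ)
    (h : ∀ j ∈ s, (f j).PosSemidef) : (∑ j ∈ s, f j).PosSemidef :=
  Finset.sum_induction f _ (fun _ _ ha hb => ha.add hb) Matrix.PosSemidef.zero h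

private lemma posSemidef_kron' {m n : Type*} [Fintype m] [Fintype n] [DecidableEq m] [DecidableEq n]
    {A : Matrix m m ℂ} {B : Matrix n n ℂ} (hA : A.PosSemidef) (hB : B.PosSemidef) :
    (A ⊗ₖ B).PosSemidef :=
  hA.kronecker hB

private lemma trace_of_partial {P E : Type*} [Fintype P] [Fintype E]
    (M : Matrix (P × E) (P × E) ℂ) (W : Matrix P P ℂ)
    (h : ∀ p q, (∑ e, M (p, e) (q, e)) = W p q) : M.trace = W.trace := by
  simp only [Matrix.trace, Matrix.diag]
  rw [Fintype.sum_prod_type]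
  exact Finset.sum_congr rfl fun p _ => h p p

/-- **Reduction to squashed non-Markovianity for product spectators:** if
`ρ_ABCD = ω_ABC ⊗ τ_D`, then `T_sq(A;C|B)_ρ = N_sq(A;C|B)_ω`. -/
theorem Tsq_eq_Nsq_product_spectator {dA dB dC dD : Type*}
    [Fintype dA] [Fintype dB] [Fintype dC] [Fintype dD]
    [DecidableEq dA] [DecidableEq dB] [DecidableEq dC] [DecidableEq dD]
    (ω : Matrix (dA × dB × dC) (dA × dB × dC) ℂ) (hω : IsDensity ω)
    (τ : Matrix dD dD ℂ) (hτ : IsDensity τ) :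
    Tsq (Matrix.of fun (p q : dA × dB × dC × dD) =>
        ω (p.1, p.2.1, p.2.2.1) (q.1, q.2.1, q.2.2.1) * τ p.2.2.2 q.2.2.2)
      = Nsq ω := by
  have hτtr : (∑ d, τ d d) = (1 : ℂ) := hτ.2
  unfold Tsq Nsq
  congr 1
  ext t
  simp only [Set.mem_setOf_eq]
  constructor
  · rintro ⟨nE, σ, ⟨hpsd, htr⟩, hmarg, ht⟩
    have key : ∀ (P Q : dA × dB × dC × dD), (∑ e, σ (P, e) (Q, e)) =
        ω (P.1, P.2.1, P.2.2.1) (Q.1, Q.2.1, Q.2.2.1) * τ P.2.2.2 Q.2.2.2 :=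
      fun P Q => congrFun (congrFun (congrArg Matrix.of.symm hmarg) P) Q
    refine ⟨nE, Matrix.of fun p q => ∑ d, σ ((p.1.1, p.1.2.1, p.1.2.2, d), p.2)
      ((q.1.1, q.1.2.1, q.1.2.2, d), q.2), ⟨?_, ?_⟩, ?_, ?_⟩
    · have hrw : (Matrix.of fun (p q : (dA × dB × dC) × Fin nE) =>
          ∑ d, σ ((p.1.1, p.1.2.1, p.1.2.2, d), p.2) ((q.1.1, q.1.2.1, q.1.2.2, d), q.2))
          = ∑ d : dD, σ.submatrix
            (fun pe => ((pe.1.1, pe.1.2.1, pe.1.2.2, d), pe.2))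
            (fun pe => ((pe.1.1, pe.1.2.1, pe.1.2.2, d), pe.2)) := by
        ext p q
        simp [Matrix.sum_apply]
      rw [hrw]
      exact posSemidef_finsum' _ _ (fun d _ => hpsd.submatrix _)
    · have hmargω : ∀ p q : dA × dB × dC,
          (∑ e, ∑ d, σ ((p.1, p.2.1, p.2.2, d), e) ((q.1, q.2.1, q.2.2, d), e)) = ω p q := by
        intro p q
        rw [Finset.sum_comm]
        calc (∑ d, ∑ e, σ ((p.1, p.2.1, p.2.2, d), e) ((q.1, q.2.1, q.2.2, d), e))
            = ∑ d, ω (p.1, p.2.1, p.2.2) (q.1, q.2.1, q.2.2) * τ d d :=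
              Finset.sum_congr rfl fun d _ => key (p.1, p.2.1, p.2.2, d) (q.1, q.2.1, q.2.2, d)
          _ = ω p q := by rw [← Finset.mul_sum, hτtr, mul_one]
      have := trace_of_partial (P := dA × dB × dC) (E := Fin nE)
        (Matrix.of fun p q => ∑ d, σ ((p.1.1, p.1.2.1, p.1.2.2, d), p.2)
          ((q.1.1, q.1.2.1, q.1.2.2, d), q.2)) ω (fun p q => hmargω p q)
      rw [this, hω.2]
    · ext p q
      simp only [Matrix.of_apply]
      rw [Finset.sum_comm]
      calc (∑ d, ∑ e, σ ((p.1, p.2.1, p.2.2, d), e) ((q.1, q.2.1, q.2.2, d), e))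
          = ∑ d, ω (p.1, p.2.1, p.2.2) (q.1, q.2.1, q.2.2) * τ d d :=
            Finset.sum_congr rfl fun d _ => key (p.1, p.2.1, p.2.2, d) (q.1, q.2.1, q.2.2, d)
        _ = ω p q := by rw [← Finset.mul_sum, hτtr, mul_one]
    · exact ht
  · rintro ⟨nE, σ', ⟨hpsd, htr⟩, hmarg, ht⟩
    have key : ∀ (P Q : dA × dB × dC), (∑ e, σ' (P, e) (Q, e)) = ω P Q :=
      fun P Q => congrFun (congrFun (congrArg Matrix.of.symm hmarg) P) Q
    refine ⟨nE, Matrix.of fun p q =>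
      σ' ((p.1.1, p.1.2.1, p.1.2.2.1), p.2) ((q.1.1, q.1.2.1, q.1.2.2.1), q.2)
        * τ p.1.2.2.2 q.1.2.2.2, ⟨?_, ?_⟩, ?_, ?_⟩
    · have hrw : (Matrix.of fun (p q : (dA × dB × dC × dD) × Fin nE) =>
          σ' ((p.1.1, p.1.2.1, p.1.2.2.1), p.2) ((q.1.1, q.1.2.1, q.1.2.2.1), q.2)
            * τ p.1.2.2.2 q.1.2.2.2)
          = (σ' ⊗ₖ τ).submatrix
            (fun pe => (((pe.1.1, pe.1.2.1, pe.1.2.2.1), pe.2), pe.1.2.2.2))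
            (fun pe => (((pe.1.1, pe.1.2.1, pe.1.2.2.1), pe.2), pe.1.2.2.2)) := by
        ext p q
        simp [Matrix.kroneckerMap_apply]
      rw [hrw]
      exact (posSemidef_kron' hpsd hτ.1).submatrix _
    · show (∑ p : (dA × dB × dC × dD) × Fin nE,
          σ' ((p.1.1, p.1.2.1, p.1.2.2.1), p.2) ((p.1.1, p.1.2.1, p.1.2.2.1), p.2)
            * τ p.1.2.2.2 p.1.2.2.2) = 1
      calc (∑ p : (dA × dB × dC × dD) × Fin nE,
            σ' ((p.1.1, p.1.2.1, p.1.2.2.1), p.2) ((p.1.1, p.1.2.1, p.1.2.2.1), p.2)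
              * τ p.1.2.2.2 p.1.2.2.2)
          = ∑ x : ((dA × dB × dC) × Fin nE) × dD, σ' x.1 x.1 * τ x.2 x.2 :=
            Fintype.sum_equiv
            ⟨fun y => (((y.1.1, y.1.2.1, y.1.2.2.1), y.2), y.1.2.2.2),
             fun x => ((x.1.1.1, x.1.1.2.1, x.1.1.2.2, x.2), x.1.2),
             fun _ => rfl, fun _ => rfl⟩ _ _ (fun _ => rfl)
        _ = ∑ x1 : (dA × dB × dC) × Fin nE, ∑ x2 : dD, σ' x1 x1 * τ x2 x2 :=
            Fintype.sum_prod_type _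
        _ = ∑ x1 : (dA × dB × dC) × Fin nE, σ' x1 x1 * ∑ x2 : dD, τ x2 x2 := by
            simp only [← Finset.mul_sum]
        _ = ∑ x1 : (dA × dB × dC) × Fin nE, σ' x1 x1 := by rw [hτtr]; simp only [mul_one]
        _ = 1 := htr
    · ext P Q
      simp only [Matrix.of_apply]
      rw [← Finset.sum_mul, key]
    · rw [ht]
      congr 1
      unfold qcmiACgivenBE qcmi3
      congr 1
      ext p q
      simp only [Matrix.of_apply]
      rw [← Finset.mul_sum, hτtr, mul_one]
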